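/- For 0 < r < R and constants C, D with C − D√(1 − r²/R²) ≠ 0, the functions ν(r) = 2·log|C − D√(1 − r²/R²)| and λ(r) = −log(1 − r²/R²) satisfy the conformal flatness condition (1 − e^{λ})/r² − ν'λ'/4 − (ν' − λ')/(2r) + ν''/2 + ν'²/4 = 0. -/

import Mathlib

open Real Set

/-- On the open set where `1 - x²/R² > 0` and `C - D√(1-x²/R²) ≠ 0`, the function
`x ↦ 2 log (C - D√(1-x²/R²))` has derivative `2Dx/(R²√(1-x²/R²)(C - D√(1-x²/R²)))`. -/
lemma aux_hasDerivAt_f (R C D : ℝ) (hR : 0 < R) (x : ℝ)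
    (hv : 0 < 1 - x ^ 2 / R ^ 2)
    (hu : C - D * Real.sqrt (1 - x ^ 2 / R ^ 2) ≠ 0) :
    HasDerivAt (fun y => 2 * Real.log (C - D * Real.sqrt (1 - y ^ 2 / R ^ 2)))
      (2 * D * x / (R ^ 2 * Real.sqrt (1 - x ^ 2 / R ^ 2)
        * (C - D * Real.sqrt (1 - x ^ 2 / R ^ 2)))) x := by
  have hR2 : (R : ℝ) ^ 2 ≠ 0 := by positivity
  have hs : 0 < Real.sqrt (1 - x ^ 2 / R ^ 2) := Real.sqrt_pos.mpr hv
  have h1 : HasDerivAt (fun y : ℝ => 1 - y ^ 2 / R ^ 2) (-(2 * x) / R ^ 2) x := by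
    have := ((hasDerivAt_pow 2 x).div_const (R ^ 2)).const_sub 1
    refine this.congr_deriv ?_
    push_cast
    ring
  have h2 : HasDerivAt (fun y : ℝ => Real.sqrt (1 - y ^ 2 / R ^ 2))
      (-(2 * x) / R ^ 2 / (2 * Real.sqrt (1 - x ^ 2 / R ^ 2))) x :=
    h1.sqrt (ne_of_gt hv)
  have h3 : HasDerivAt (fun y : ℝ => C - D * Real.sqrt (1 - y ^ 2 / R ^ 2))
      (-(D * (-(2 * x) / R ^ 2 / (2 * Real.sqrt (1 - x ^ 2 / R ^ 2))))) x :=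
    (h2.const_mul D).const_sub C
  have h4 := (h3.log hu).const_mul 2
  refine h4.congr_deriv ?_
  have hsne : Real.sqrt (1 - x ^ 2 / R ^ 2) ≠ 0 := ne_of_gt hs
  generalize Real.sqrt (1 - x ^ 2 / R ^ 2) = s at hsne hu ⊢
  field_simp

set_option maxHeartbeats 1000000 in
theorem schwarzschild_interior_conformally_flat
    (R C D : ℝ) (hR : 0 < R) :
    ∀ r : ℝ, 0 < r → r < R →
      C - D * Real.sqrt (1 - r ^ 2 / R ^ 2) ≠ 0 →
      (fun (f g : ℝ → ℝ) =>
        (1 - Real.exp (g r)) / r ^ 2 - deriv f r * deriv g r / 4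
          - (deriv f r - deriv g r) / (2 * r)
          + deriv (deriv f) r / 2 + (deriv f r) ^ 2 / 4 = 0)
      (fun r => 2 * Real.log |C - D * Real.sqrt (1 - r ^ 2 / R ^ 2)|)
      (fun r => -Real.log (1 - r ^ 2 / R ^ 2)) := by
  intro r hr hrR hu
  simp only
  have hR2 : (0:ℝ) < R ^ 2 := by positivity
  have hv : 0 < 1 - r ^ 2 / R ^ 2 := by
    rw [sub_pos, div_lt_one hR2]
    nlinarith
  have hs : 0 < Real.sqrt (1 - r ^ 2 / R ^ 2) := Real.sqrt_pos.mpr hv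
  have hs2 : Real.sqrt (1 - r ^ 2 / R ^ 2) ^ 2 = 1 - r ^ 2 / R ^ 2 :=
    Real.sq_sqrt hv.le
  -- remove the absolute value
  have habs : (fun x : ℝ => 2 * Real.log |C - D * Real.sqrt (1 - x ^ 2 / R ^ 2)|)
      = (fun x : ℝ => 2 * Real.log (C - D * Real.sqrt (1 - x ^ 2 / R ^ 2))) := by
    funext x; rw [Real.log_abs]
  rw [habs]
  set f : ℝ → ℝ := fun x => 2 * Real.log (C - D * Real.sqrt (1 - x ^ 2 / R ^ 2)) with hf
  set F : ℝ → ℝ := fun x => 2 * D * x / (R ^ 2 * Real.sqrt (1 - x ^ 2 / R ^ 2)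
      * (C - D * Real.sqrt (1 - x ^ 2 / R ^ 2))) with hF
  -- the open set of good points
  have hUopen : IsOpen {x : ℝ | 0 < 1 - x ^ 2 / R ^ 2
      ∧ C - D * Real.sqrt (1 - x ^ 2 / R ^ 2) ≠ 0} := by
    have hc1 : Continuous fun x : ℝ => 1 - x ^ 2 / R ^ 2 :=
      continuous_const.sub ((continuous_pow 2).div_const _)
    have hc2 : Continuous fun x : ℝ => C - D * Real.sqrt (1 - x ^ 2 / R ^ 2) :=
      continuous_const.sub (continuous_const.mul (Real.continuous_sqrt.comp hc1))
    exact (isOpen_lt continuous_const hc1).inter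
      (isOpen_ne_fun hc2 continuous_const)
  have hrU : r ∈ {x : ℝ | 0 < 1 - x ^ 2 / R ^ 2
      ∧ C - D * Real.sqrt (1 - x ^ 2 / R ^ 2) ≠ 0} := ⟨hv, hu⟩
  -- deriv f equals F near r
  have hderiv_eq : deriv f =ᶠ[nhds r] F := by
    filter_upwards [hUopen.mem_nhds hrU] with x hx
    exact (aux_hasDerivAt_f R C D hR x hx.1 hx.2).deriv
  have hderiv_f : deriv f r = F r := (aux_hasDerivAt_f R C D hR r hv hu).deriv
  -- second derivative
  have hsne : Real.sqrt (1 - r ^ 2 / R ^ 2) ≠ 0 := ne_of_gt hs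
  have hden : R ^ 2 * Real.sqrt (1 - r ^ 2 / R ^ 2)
      * (C - D * Real.sqrt (1 - r ^ 2 / R ^ 2)) ≠ 0 :=
    mul_ne_zero (mul_ne_zero (ne_of_gt hR2) hsne) hu
  have h1 : HasDerivAt (fun y : ℝ => 1 - y ^ 2 / R ^ 2) (-(2 * r) / R ^ 2) r := by
    have := ((hasDerivAt_pow 2 r).div_const (R ^ 2)).const_sub 1
    refine this.congr_deriv ?_
    push_cast
    ring
  have h2 : HasDerivAt (fun y : ℝ => Real.sqrt (1 - y ^ 2 / R ^ 2))
      (-(2 * r) / R ^ 2 / (2 * Real.sqrt (1 - r ^ 2 / R ^ 2))) r :=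
    h1.sqrt (ne_of_gt hv)
  have h3 : HasDerivAt (fun y : ℝ => C - D * Real.sqrt (1 - y ^ 2 / R ^ 2))
      (-(D * (-(2 * r) / R ^ 2 / (2 * Real.sqrt (1 - r ^ 2 / R ^ 2))))) r :=
    (h2.const_mul D).const_sub C
  have hden' : HasDerivAt (fun y : ℝ => R ^ 2 * Real.sqrt (1 - y ^ 2 / R ^ 2)
      * (C - D * Real.sqrt (1 - y ^ 2 / R ^ 2)))
      ((R ^ 2 * (-(2 * r) / R ^ 2 / (2 * Real.sqrt (1 - r ^ 2 / R ^ 2))))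
        * (C - D * Real.sqrt (1 - r ^ 2 / R ^ 2))
        + (R ^ 2 * Real.sqrt (1 - r ^ 2 / R ^ 2))
          * (-(D * (-(2 * r) / R ^ 2 / (2 * Real.sqrt (1 - r ^ 2 / R ^ 2)))))) r :=
    (h2.const_mul (R ^ 2)).mul h3
  have hnum : HasDerivAt (fun y : ℝ => 2 * D * y) (2 * D) r := by
    simpa using (hasDerivAt_id r).const_mul (2 * D)
  have hF' : HasDerivAt F
      ((2 * D * (R ^ 2 * Real.sqrt (1 - r ^ 2 / R ^ 2)
          * (C - D * Real.sqrt (1 - r ^ 2 / R ^ 2)))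
        - 2 * D * r * ((R ^ 2 * (-(2 * r) / R ^ 2 / (2 * Real.sqrt (1 - r ^ 2 / R ^ 2))))
          * (C - D * Real.sqrt (1 - r ^ 2 / R ^ 2))
          + (R ^ 2 * Real.sqrt (1 - r ^ 2 / R ^ 2))
            * (-(D * (-(2 * r) / R ^ 2 / (2 * Real.sqrt (1 - r ^ 2 / R ^ 2)))))))
        / (R ^ 2 * Real.sqrt (1 - r ^ 2 / R ^ 2)
          * (C - D * Real.sqrt (1 - r ^ 2 / R ^ 2))) ^ 2) r :=
    hnum.div hden' hden
  have hderiv2 : deriv (deriv f) r = deriv F r := hderiv_eq.deriv_eq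
  have hderivF : deriv F r = _ := hF'.deriv
  -- derivative of g
  have hg : HasDerivAt (fun y : ℝ => -Real.log (1 - y ^ 2 / R ^ 2))
      (-(-(2 * r) / R ^ 2 / (1 - r ^ 2 / R ^ 2))) r := (h1.log (ne_of_gt hv)).neg
  have hderiv_g : deriv (fun y : ℝ => -Real.log (1 - y ^ 2 / R ^ 2)) r
      = -(-(2 * r) / R ^ 2 / (1 - r ^ 2 / R ^ 2)) := hg.deriv
  -- exp of g
  have hexp : Real.exp (-Real.log (1 - r ^ 2 / R ^ 2)) = (1 - r ^ 2 / R ^ 2)⁻¹ := by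
    rw [Real.exp_neg, Real.exp_log hv]
  rw [hderiv_f, hderiv_g, hderiv2, hderivF, hexp, hF]
  have hrne : r ≠ 0 := ne_of_gt hr
  have hRne : R ≠ 0 := ne_of_gt hR
  beta_reduce
  clear hderiv_eq hderiv_f hderiv2 hderivF hF' hden' hg hderiv_g hexp h1 h2 h3
    hnum hden hUopen hrU habs hf hF
  generalize hgen : Real.sqrt (1 - r ^ 2 / R ^ 2) = s at hu hs hs2 ⊢
  have hsne : s ≠ 0 := ne_of_gt hs
  have hr2 : r ^ 2 = R ^ 2 - R ^ 2 * s ^ 2 := by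
    field_simp at hs2
    linarith
  rw [← hs2]
  have hu' : C - s * D ≠ 0 := by rwa [mul_comm]
  field_simp
  linear_combination (4 * s * R ^ 2 * (C - s * D) ^ 2) * hr2
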